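/- In ℤ² with unit squares, consider the hard-core mixture of diamonds T₁ (tetragon with vertices (±1,0),(0,±1)) and octagons T₂ (octagon with vertices (0,−1),(1,−1),(2,0),(2,1),(1,2),(0,2),(−1,1),(−1,0)) placed at lattice sites without overlapping interiors. If a configuration tiles the plane so that every diamond's Voronoi cell has Lebesgue area exactly 2 and every octagon's Voronoi cell has area exactly 7, and the configuration contains at least one octagon, then the configuration is a translate of the truncated square tiling. If it contains no octagon, it is the regular square tiling of the plane by diamonds. -/

import Mathlib

open MeasureTheory
open scoped ENNReal

/-- The diamond T₁: tetragon with vertices (±1,0), (0,±1). -/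
noncomputable def diamond : Set (ℝ × ℝ) :=
  convexHull ℝ {((1 : ℝ), (0 : ℝ)), (-1, 0), (0, 1), (0, -1)}

/-- The octagon T₂ with vertices (0,−1),(1,−1),(2,0),(2,1),(1,2),(0,2),(−1,1),(−1,0). -/
noncomputable def octagon : Set (ℝ × ℝ) :=
  convexHull ℝ {((0 : ℝ), (-1 : ℝ)), (1, -1), (2, 0), (2, 1), (1, 2), (0, 2), (-1, 1), (-1, 0)}

/-- Tile shapes: `false` = diamond, `true` = octagon. -/
noncomputable def tileShape : Bool → Set (ℝ × ℝ) := fun b => if b then octagon else diamond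

/-- The tile of a particle (lattice position, shape) placed at its position. -/
noncomputable def placedTile (p : (ℤ × ℤ) × Bool) : Set (ℝ × ℝ) :=
  (fun w => ((p.1.1 : ℝ) + w.1, (p.1.2 : ℝ) + w.2)) '' tileShape p.2

/-- The Voronoi cell of a placed tile with respect to a configuration. -/
noncomputable def vorCell (X : Set ((ℤ × ℤ) × Bool)) (x : (ℤ × ℤ) × Bool) : Set (ℝ × ℝ) :=
  {v : ℝ × ℝ | ∀ y ∈ X, Metric.infDist v (placedTile x) ≤ Metric.infDist v (placedTile y)}

/-- The truncated square tiling: octagons at 3ℤ × 3ℤ, diamonds at 3ℤ × 3ℤ + (2,2). -/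
def truncSquareTiling : Set ((ℤ × ℤ) × Bool) :=
  {p | (p.2 = true ∧ ∃ a b : ℤ, p.1 = (3 * a, 3 * b)) ∨
       (p.2 = false ∧ ∃ a b : ℤ, p.1 = (3 * a + 2, 3 * b + 2))}

/-- The regular square tiling of the plane by diamonds. -/
def diamondTiling : Set ((ℤ × ℤ) × Bool) :=
  {p | p.2 = false ∧ (p.1.1 + p.1.2) % 2 = 0}

/-- Translate of a configuration by a lattice vector. -/
def translateConfig (t : ℤ × ℤ) (Y : Set ((ℤ × ℤ) × Bool)) : Set ((ℤ × ℤ) × Bool) :=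
  (fun p : (ℤ × ℤ) × Bool => ((t.1 + p.1.1, t.2 + p.1.2), p.2)) '' Y

set_option maxHeartbeats 1000000
set_option linter.unnecessarySeqFocus false
set_option linter.unreachableTactic false
set_option linter.unusedTactic false

lemma convex_hs (α β γ : ℝ) : Convex ℝ {v : ℝ × ℝ | α*v.1 + β*v.2 ≤ γ} := by
  intro p hp q hq u v hu hv huv
  simp only [Set.mem_setOf_eq] at *
  have h1 : α*(u•p+v•q).1 + β*(u•p+v•q).2 = u*(α*p.1+β*p.2) + v*(α*q.1+β*q.2) := by
    simp only [Prod.fst_add, Prod.snd_add, Prod.smul_fst, Prod.smul_snd, smul_eq_mul]; ring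
  rw [h1]
  have k1 := mul_le_mul_of_nonneg_left hp hu
  have k2 := mul_le_mul_of_nonneg_left hq hv
  have k3 : u*γ + v*γ = γ := by rw [← add_mul, huv, one_mul]
  linarith

lemma hull_le {S : Set (ℝ×ℝ)} (α β γ : ℝ) (hS : ∀ v ∈ S, α*v.1+β*v.2 ≤ γ) {p : ℝ×ℝ}
    (hp : p ∈ convexHull ℝ S) : α*p.1+β*p.2 ≤ γ :=
  convexHull_min hS (convex_hs α β γ) hp

lemma mem_seg {P Q : ℝ×ℝ} (t : ℝ) (h0 : 0 ≤ t) (h1 : t ≤ 1) {x y : ℝ}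
    (hx : x = (1-t)*P.1 + t*Q.1) (hy : y = (1-t)*P.2 + t*Q.2) : (x,y) ∈ segment ℝ P Q := by
  refine ⟨1-t, t, by linarith, h0, by ring, ?_⟩
  have : ((1-t)•P + t•Q) = ((1-t)*P.1 + t*Q.1, (1-t)*P.2 + t*Q.2) := by
    rw [Prod.ext_iff]
    simp only [Prod.smul_fst, Prod.smul_snd, Prod.fst_add, Prod.snd_add, smul_eq_mul]
    exact ⟨trivial, trivial⟩
  rw [this, hx, hy]

lemma hull3 {S : Set (ℝ×ℝ)} {v1 v2 v3 : ℝ×ℝ} (h1 : v1 ∈ S) (h2 : v2 ∈ S) (h3 : v3 ∈ S)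
    {a1 a2 a3 : ℝ} (ha1 : 0 ≤ a1) (ha2 : 0 ≤ a2) (ha3 : 0 ≤ a3) (hs : a1+a2+a3 = 1)
    {x y : ℝ} (hx : x = a1*v1.1+a2*v2.1+a3*v3.1) (hy : y = a1*v1.2+a2*v2.2+a3*v3.2) :
    (x,y) ∈ convexHull ℝ S := by
  have hmem := Finset.centerMass_mem_convexHull (t := (Finset.univ : Finset (Fin 3)))
      (w := ![a1,a2,a3]) (z := ![v1,v2,v3])
      (by intro i _; fin_cases i <;> assumption)
      (by simp [Fin.sum_univ_three]; linarith)
      (by intro i _; fin_cases i <;> assumption)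
  have : (Finset.univ : Finset (Fin 3)).centerMass ![a1,a2,a3] ![v1,v2,v3] = (x,y) := by
    rw [Finset.centerMass]
    simp only [Fin.sum_univ_three, Matrix.cons_val_zero, Matrix.cons_val_one, Matrix.head_cons,
      Matrix.cons_val_two, Matrix.tail_cons]
    rw [hs, inv_one, one_smul, Prod.ext_iff]
    simp only [Prod.smul_fst, Prod.smul_snd, Prod.fst_add, Prod.snd_add, smul_eq_mul]
    exact ⟨by rw [hx], by rw [hy]⟩
  rwa [this] at hmem

lemma diamond_mem_iff {x y : ℝ} :
    (x, y) ∈ diamond ↔ (x + y ≤ 1 ∧ -1 ≤ x + y ∧ x - y ≤ 1 ∧ -1 ≤ x - y) := by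
  constructor
  · intro h
    rw [diamond] at h
    have e1 := hull_le 1 1 1 (by rintro v (rfl|rfl|rfl|rfl) <;> norm_num) h
    have e2 := hull_le (-1) (-1) 1 (by rintro v (rfl|rfl|rfl|rfl) <;> norm_num) h
    have e3 := hull_le 1 (-1) 1 (by rintro v (rfl|rfl|rfl|rfl) <;> norm_num) h
    have e4 := hull_le (-1) 1 1 (by rintro v (rfl|rfl|rfl|rfl) <;> norm_num) h
    simp only at e1 e2 e3 e4
    exact ⟨by linarith, by linarith, by linarith, by linarith⟩
  · rintro ⟨h1, h2, h3, h4⟩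
    rw [diamond]
    rcases le_total 0 x with hx | hx
    · exact hull3 (v1 := ((1:ℝ),(0:ℝ))) (v2 := (0,1)) (v3 := (0,-1))
        (by norm_num) (by norm_num) (by norm_num)
        (a1 := x) (a2 := (1-x+y)/2) (a3 := (1-x-y)/2)
        hx (by linarith) (by linarith) (by ring)
        (by norm_num) (by norm_num <;> ring)
    · exact hull3 (v1 := ((-1:ℝ),(0:ℝ))) (v2 := (0,1)) (v3 := (0,-1))
        (by norm_num) (by norm_num) (by norm_num)
        (a1 := -x) (a2 := (1+x+y)/2) (a3 := (1+x-y)/2)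
        (by linarith) (by linarith) (by linarith) (by ring)
        (by norm_num) (by norm_num <;> ring)

lemma octagon_mem_iff {x y : ℝ} :
    (x, y) ∈ octagon ↔ (-1 ≤ x ∧ x ≤ 2 ∧ -1 ≤ y ∧ y ≤ 2 ∧
      -1 ≤ x + y ∧ x + y ≤ 3 ∧ -2 ≤ x - y ∧ x - y ≤ 2) := by
  constructor
  · intro h
    rw [octagon] at h
    have e1 := hull_le (-1) 0 1 (by rintro v (rfl|rfl|rfl|rfl|rfl|rfl|rfl|rfl) <;> norm_num) h
    have e2 := hull_le 1 0 2 (by rintro v (rfl|rfl|rfl|rfl|rfl|rfl|rfl|rfl) <;> norm_num) h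
    have e3 := hull_le 0 (-1) 1 (by rintro v (rfl|rfl|rfl|rfl|rfl|rfl|rfl|rfl) <;> norm_num) h
    have e4 := hull_le 0 1 2 (by rintro v (rfl|rfl|rfl|rfl|rfl|rfl|rfl|rfl) <;> norm_num) h
    have e5 := hull_le (-1) (-1) 1 (by rintro v (rfl|rfl|rfl|rfl|rfl|rfl|rfl|rfl) <;> norm_num) h
    have e6 := hull_le 1 1 3 (by rintro v (rfl|rfl|rfl|rfl|rfl|rfl|rfl|rfl) <;> norm_num) h
    have e7 := hull_le (-1) 1 2 (by rintro v (rfl|rfl|rfl|rfl|rfl|rfl|rfl|rfl) <;> norm_num) h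
    have e8 := hull_le 1 (-1) 2 (by rintro v (rfl|rfl|rfl|rfl|rfl|rfl|rfl|rfl) <;> norm_num) h
    simp only at e1 e2 e3 e4 e5 e6 e7 e8
    refine ⟨by linarith, by linarith, by linarith, by linarith, by linarith, by linarith,
      by linarith, by linarith⟩
  · rintro ⟨h1, h2, h3, h4, h5, h6, h7, h8⟩
    rw [octagon]
    have cc := convex_convexHull ℝ
      ({((0 : ℝ), (-1 : ℝ)), (1, -1), (2, 0), (2, 1), (1, 2), (0, 2), (-1, 1), (-1, 0)} :
        Set (ℝ×ℝ))
    have hv : ∀ v ∈ ({((0 : ℝ), (-1 : ℝ)), (1, -1), (2, 0), (2, 1), (1, 2), (0, 2), (-1, 1),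
        (-1, 0)} : Set (ℝ×ℝ)), v ∈ convexHull ℝ ({((0 : ℝ), (-1 : ℝ)), (1, -1), (2, 0), (2, 1),
        (1, 2), (0, 2), (-1, 1), (-1, 0)} : Set (ℝ×ℝ)) := fun v hv => subset_convexHull ℝ _ hv
    rcases le_total y 0 with hy | hy
    · -- bottom band
      have hL : ((-1-y, y) : ℝ×ℝ) ∈ convexHull ℝ _ := cc.segment_subset
        (hv _ (by norm_num)) (hv _ (by norm_num))
        (mem_seg (P := ((0:ℝ),(-1:ℝ))) (Q := ((-1:ℝ),(0:ℝ))) (y+1)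
          (by linarith) (by linarith) (by norm_num <;> ring) (by norm_num <;> ring))
      have hR : ((2+y, y) : ℝ×ℝ) ∈ convexHull ℝ _ := cc.segment_subset
        (hv _ (by norm_num)) (hv _ (by norm_num))
        (mem_seg (P := ((1:ℝ),(-1:ℝ))) (Q := ((2:ℝ),(0:ℝ))) (y+1)
          (by linarith) (by linarith) (by norm_num <;> ring) (by norm_num <;> ring))
      have hden : (3+2*y) > 0 := by linarith
      refine cc.segment_subset hL hR
        (mem_seg (P := ((-1-y, y) : ℝ×ℝ)) (Q := ((2+y, y) : ℝ×ℝ)) ((x+1+y)/(3+2*y))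
          (div_nonneg (by linarith) (by linarith))
          ((div_le_one hden).mpr (by linarith)) ?_ ?_)
      · show x = (1-(x+1+y)/(3+2*y))*(-1-y) + ((x+1+y)/(3+2*y))*(2+y)
        rw [one_sub_div hden.ne', div_mul_eq_mul_div, div_mul_eq_mul_div, ← add_div, eq_div_iff hden.ne']; ring
      · show y = (1-(x+1+y)/(3+2*y))*y + ((x+1+y)/(3+2*y))*y
        field_simp <;> ring
    rcases le_total y 1 with hy1 | hy1
    · -- middle band
      have hL : ((-1, y) : ℝ×ℝ) ∈ convexHull ℝ _ := cc.segment_subset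
        (hv _ (by norm_num)) (hv _ (by norm_num))
        (mem_seg (P := ((-1:ℝ),(0:ℝ))) (Q := ((-1:ℝ),(1:ℝ))) y
          (by linarith) (by linarith) (by norm_num <;> ring) (by norm_num <;> ring))
      have hR : ((2, y) : ℝ×ℝ) ∈ convexHull ℝ _ := cc.segment_subset
        (hv _ (by norm_num)) (hv _ (by norm_num))
        (mem_seg (P := ((2:ℝ),(0:ℝ))) (Q := ((2:ℝ),(1:ℝ))) y
          (by linarith) (by linarith) (by norm_num <;> ring) (by norm_num <;> ring))
      refine cc.segment_subset hL hR
        (mem_seg (P := ((-1, y) : ℝ×ℝ)) (Q := ((2, y) : ℝ×ℝ)) ((x+1)/3)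
          (by linarith) (by linarith) ?_ ?_)
      · show x = (1-(x+1)/3)*(-1) + ((x+1)/3)*2
        ring
      · show y = (1-(x+1)/3)*y + ((x+1)/3)*y
        ring
    · -- top band
      have hL : ((y-2, y) : ℝ×ℝ) ∈ convexHull ℝ _ := cc.segment_subset
        (hv _ (by norm_num)) (hv _ (by norm_num))
        (mem_seg (P := ((-1:ℝ),(1:ℝ))) (Q := ((0:ℝ),(2:ℝ))) (y-1)
          (by linarith) (by linarith) (by norm_num <;> ring) (by norm_num <;> ring))
      have hR : ((3-y, y) : ℝ×ℝ) ∈ convexHull ℝ _ := cc.segment_subset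
        (hv _ (by norm_num)) (hv _ (by norm_num))
        (mem_seg (P := ((2:ℝ),(1:ℝ))) (Q := ((1:ℝ),(2:ℝ))) (y-1)
          (by linarith) (by linarith) (by norm_num <;> ring) (by norm_num <;> ring))
      have hden : (5-2*y) > 0 := by linarith
      refine cc.segment_subset hL hR
        (mem_seg (P := ((y-2, y) : ℝ×ℝ)) (Q := ((3-y, y) : ℝ×ℝ)) ((x-y+2)/(5-2*y))
          (div_nonneg (by linarith) (by linarith))
          ((div_le_one hden).mpr (by linarith)) ?_ ?_)
      · show x = (1-(x-y+2)/(5-2*y))*(y-2) + ((x-y+2)/(5-2*y))*(3-y)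
        rw [one_sub_div hden.ne', div_mul_eq_mul_div, div_mul_eq_mul_div, ← add_div, eq_div_iff hden.ne']; ring
      · show y = (1-(x-y+2)/(5-2*y))*y + ((x-y+2)/(5-2*y))*y
        field_simp <;> ring



lemma mem_placedTile_iff {a b : ℤ} {s : Bool} {v : ℝ×ℝ} :
    v ∈ placedTile ((a,b),s) ↔ (v.1 - a, v.2 - b) ∈ tileShape s := by
  constructor
  · rintro ⟨w, hw, rfl⟩
    simpa using hw
  · intro h
    exact ⟨(v.1 - a, v.2 - b), h, by simp⟩

lemma placed_dia_iff {a b : ℤ} {x y : ℝ} :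
    (x,y) ∈ placedTile ((a,b),false) ↔
      ((x-a) + (y-b) ≤ 1 ∧ -1 ≤ (x-a) + (y-b) ∧ (x-a) - (y-b) ≤ 1 ∧ -1 ≤ (x-a) - (y-b)) := by
  rw [mem_placedTile_iff]
  show ((x,y).1 - a, (x,y).2 - b) ∈ diamond ↔ _
  exact diamond_mem_iff

lemma placed_oct_iff {a b : ℤ} {x y : ℝ} :
    (x,y) ∈ placedTile ((a,b),true) ↔
      (-1 ≤ x-a ∧ x-a ≤ 2 ∧ -1 ≤ y-b ∧ y-b ≤ 2 ∧
        -1 ≤ (x-a) + (y-b) ∧ (x-a) + (y-b) ≤ 3 ∧ -2 ≤ (x-a) - (y-b) ∧ (x-a) - (y-b) ≤ 2) := by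
  rw [mem_placedTile_iff]
  show ((x,y).1 - a, (x,y).2 - b) ∈ octagon ↔ _
  exact octagon_mem_iff

lemma interior_dia (a b : ℤ) (x y : ℝ)
    (h : (x-a) + (y-b) < 1 ∧ -1 < (x-a) + (y-b) ∧ (x-a) - (y-b) < 1 ∧ -1 < (x-a) - (y-b)) :
    (x,y) ∈ interior (placedTile ((a,b),false)) := by
  have hU : IsOpen {v : ℝ×ℝ | (v.1-a) + (v.2-b) < 1 ∧ -1 < (v.1-a) + (v.2-b) ∧
      (v.1-a) - (v.2-b) < 1 ∧ -1 < (v.1-a) - (v.2-b)} := by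
    refine IsOpen.and ?_ (IsOpen.and ?_ (IsOpen.and ?_ ?_)) <;>
      apply isOpen_lt <;> fun_prop
  refine interior_maximal ?_ hU h
  rintro ⟨u1, u2⟩ hu
  rw [placed_dia_iff]
  obtain ⟨k1, k2, k3, k4⟩ := hu
  exact ⟨le_of_lt k1, le_of_lt k2, le_of_lt k3, le_of_lt k4⟩

lemma interior_oct (a b : ℤ) (x y : ℝ)
    (h : -1 < x-a ∧ x-a < 2 ∧ -1 < y-b ∧ y-b < 2 ∧
      -1 < (x-a) + (y-b) ∧ (x-a) + (y-b) < 3 ∧ -2 < (x-a) - (y-b) ∧ (x-a) - (y-b) < 2) :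
    (x,y) ∈ interior (placedTile ((a,b),true)) := by
  have hU : IsOpen {v : ℝ×ℝ | -1 < v.1-a ∧ v.1-a < 2 ∧ -1 < v.2-b ∧ v.2-b < 2 ∧
      -1 < (v.1-a) + (v.2-b) ∧ (v.1-a) + (v.2-b) < 3 ∧
      -2 < (v.1-a) - (v.2-b) ∧ (v.1-a) - (v.2-b) < 2} := by
    refine IsOpen.and ?_ (IsOpen.and ?_ (IsOpen.and ?_ (IsOpen.and ?_ (IsOpen.and ?_
      (IsOpen.and ?_ (IsOpen.and ?_ ?_)))))) <;>
      apply isOpen_lt <;> fun_prop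
  refine interior_maximal ?_ hU h
  rintro ⟨u1, u2⟩ hu
  rw [placed_oct_iff]
  obtain ⟨k1, k2, k3, k4, k5, k6, k7, k8⟩ := hu
  exact ⟨le_of_lt k1, le_of_lt k2, le_of_lt k3, le_of_lt k4, le_of_lt k5, le_of_lt k6,
    le_of_lt k7, le_of_lt k8⟩

lemma no_overlap {X : Set ((ℤ×ℤ)×Bool)}
    (hadm : X.Pairwise fun p q => Disjoint (interior (placedTile p)) (interior (placedTile q)))
    {p q : (ℤ×ℤ)×Bool} (hp : p ∈ X) (hq : q ∈ X) (hne : p ≠ q) {v : ℝ×ℝ}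
    (h1 : v ∈ interior (placedTile p)) (h2 : v ∈ interior (placedTile q)) : False :=
  Set.disjoint_left.mp (hadm hp hq hne) h1 h2

lemma cover_point {X : Set ((ℤ×ℤ)×Bool)} (hcov : ⋃ p ∈ X, placedTile p = Set.univ)
    (v : ℝ×ℝ) : ∃ p ∈ X, v ∈ placedTile p := by
  have : v ∈ ⋃ p ∈ X, placedTile p := by rw [hcov]; trivial
  simpa using this

lemma int_lt_of_cast {m n : ℤ} (h : (m:ℝ) < (n:ℝ)) : m < n := by exact_mod_cast h




lemma candU {c d : ℤ} {s : Bool} (i j : ℤ)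
    (h : (((i:ℝ)+1/2, (j:ℝ)+1/4) : ℝ×ℝ) ∈ placedTile ((c,d),s)) :
    (s = false ∧ ((c = i ∧ d = j) ∨ (c = i+1 ∧ d = j))) ∨ (s = true ∧ ((c = i-1 ∧ d = j-1) ∨ (c = i-1 ∧ d = j) ∨ (c = i ∧ d = j-1) ∨ (c = i ∧ d = j) ∨ (c = i ∧ d = j+1) ∨ (c = i+1 ∧ d = j-1) ∨ (c = i+1 ∧ d = j))) := by
  cases s
  · left
    rw [placed_dia_iff] at h
    obtain ⟨k1, k2, k3, k4⟩ := h
    have m1 : (i+j-1 : ℤ) < c + d := by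
      have : ((i+j-1 : ℤ):ℝ) < ((c+d : ℤ):ℝ) := by push_cast; linarith
      exact int_lt_of_cast this
    have m2 : c + d < (i+j+2 : ℤ) := by
      have : ((c+d : ℤ):ℝ) < ((i+j+2 : ℤ):ℝ) := by push_cast; linarith
      exact int_lt_of_cast this
    have m3 : (i-j-1 : ℤ) < c - d := by
      have : ((i-j-1 : ℤ):ℝ) < ((c-d : ℤ):ℝ) := by push_cast; linarith
      exact int_lt_of_cast this
    have m4 : c - d < (i-j+2 : ℤ) := by
      have : ((c-d : ℤ):ℝ) < ((i-j+2 : ℤ):ℝ) := by push_cast; linarith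
      exact int_lt_of_cast this
    exact ⟨rfl, by omega⟩
  · right
    rw [placed_oct_iff] at h
    obtain ⟨k1, k2, k3, k4, k5, k6, k7, k8⟩ := h
    have mx1 : (i-2 : ℤ) < c := by
      have : ((i-2 : ℤ):ℝ) < ((c : ℤ):ℝ) := by push_cast; linarith
      exact int_lt_of_cast this
    have mx2 : c < (i+2 : ℤ) := by
      have : ((c : ℤ):ℝ) < ((i+2 : ℤ):ℝ) := by push_cast; linarith
      exact int_lt_of_cast this
    have my1 : (j-2 : ℤ) < d := by
      have : ((j-2 : ℤ):ℝ) < ((d : ℤ):ℝ) := by push_cast; linarith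
      exact int_lt_of_cast this
    have my2 : d < (j+2 : ℤ) := by
      have : ((d : ℤ):ℝ) < ((j+2 : ℤ):ℝ) := by push_cast; linarith
      exact int_lt_of_cast this
    have ms1 : (i+j-3 : ℤ) < c+d := by
      have : ((i+j-3 : ℤ):ℝ) < ((c+d : ℤ):ℝ) := by push_cast; linarith
      exact int_lt_of_cast this
    have ms2 : c+d < (i+j+2 : ℤ) := by
      have : ((c+d : ℤ):ℝ) < ((i+j+2 : ℤ):ℝ) := by push_cast; linarith
      exact int_lt_of_cast this
    have md1 : (i-j-2 : ℤ) < c-d := by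
      have : ((i-j-2 : ℤ):ℝ) < ((c-d : ℤ):ℝ) := by push_cast; linarith
      exact int_lt_of_cast this
    have md2 : c-d < (i-j+3 : ℤ) := by
      have : ((c-d : ℤ):ℝ) < ((i-j+3 : ℤ):ℝ) := by push_cast; linarith
      exact int_lt_of_cast this
    exact ⟨rfl, by omega⟩

lemma candUp {c d : ℤ} {s : Bool} (i j : ℤ)
    (h : (((i:ℝ)+1/2, (j:ℝ)+3/4) : ℝ×ℝ) ∈ placedTile ((c,d),s)) :
    (s = false ∧ ((c = i ∧ d = j+1) ∨ (c = i+1 ∧ d = j+1))) ∨ (s = true ∧ ((c = i-1 ∧ d = j) ∨ (c = i-1 ∧ d = j+1) ∨ (c = i ∧ d = j-1) ∨ (c = i ∧ d = j) ∨ (c = i ∧ d = j+1) ∨ (c = i+1 ∧ d = j) ∨ (c = i+1 ∧ d = j+1))) := by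
  cases s
  · left
    rw [placed_dia_iff] at h
    obtain ⟨k1, k2, k3, k4⟩ := h
    have m1 : (i+j : ℤ) < c + d := by
      have : ((i+j : ℤ):ℝ) < ((c+d : ℤ):ℝ) := by push_cast; linarith
      exact int_lt_of_cast this
    have m2 : c + d < (i+j+3 : ℤ) := by
      have : ((c+d : ℤ):ℝ) < ((i+j+3 : ℤ):ℝ) := by push_cast; linarith
      exact int_lt_of_cast this
    have m3 : (i-j-2 : ℤ) < c - d := by
      have : ((i-j-2 : ℤ):ℝ) < ((c-d : ℤ):ℝ) := by push_cast; linarith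
      exact int_lt_of_cast this
    have m4 : c - d < (i-j+1 : ℤ) := by
      have : ((c-d : ℤ):ℝ) < ((i-j+1 : ℤ):ℝ) := by push_cast; linarith
      exact int_lt_of_cast this
    exact ⟨rfl, by omega⟩
  · right
    rw [placed_oct_iff] at h
    obtain ⟨k1, k2, k3, k4, k5, k6, k7, k8⟩ := h
    have mx1 : (i-2 : ℤ) < c := by
      have : ((i-2 : ℤ):ℝ) < ((c : ℤ):ℝ) := by push_cast; linarith
      exact int_lt_of_cast this
    have mx2 : c < (i+2 : ℤ) := by
      have : ((c : ℤ):ℝ) < ((i+2 : ℤ):ℝ) := by push_cast; linarith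
      exact int_lt_of_cast this
    have my1 : (j-2 : ℤ) < d := by
      have : ((j-2 : ℤ):ℝ) < ((d : ℤ):ℝ) := by push_cast; linarith
      exact int_lt_of_cast this
    have my2 : d < (j+2 : ℤ) := by
      have : ((d : ℤ):ℝ) < ((j+2 : ℤ):ℝ) := by push_cast; linarith
      exact int_lt_of_cast this
    have ms1 : (i+j-2 : ℤ) < c+d := by
      have : ((i+j-2 : ℤ):ℝ) < ((c+d : ℤ):ℝ) := by push_cast; linarith
      exact int_lt_of_cast this
    have ms2 : c+d < (i+j+3 : ℤ) := by
      have : ((c+d : ℤ):ℝ) < ((i+j+3 : ℤ):ℝ) := by push_cast; linarith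
      exact int_lt_of_cast this
    have md1 : (i-j-3 : ℤ) < c-d := by
      have : ((i-j-3 : ℤ):ℝ) < ((c-d : ℤ):ℝ) := by push_cast; linarith
      exact int_lt_of_cast this
    have md2 : c-d < (i-j+2 : ℤ) := by
      have : ((c-d : ℤ):ℝ) < ((i-j+2 : ℤ):ℝ) := by push_cast; linarith
      exact int_lt_of_cast this
    exact ⟨rfl, by omega⟩

lemma candR {c d : ℤ} {s : Bool} (i j : ℤ)
    (h : (((i:ℝ)+1/4, (j:ℝ)+1/2) : ℝ×ℝ) ∈ placedTile ((c,d),s)) :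
    (s = false ∧ ((c = i ∧ d = j) ∨ (c = i ∧ d = j+1))) ∨ (s = true ∧ ((c = i-1 ∧ d = j-1) ∨ (c = i-1 ∧ d = j) ∨ (c = i-1 ∧ d = j+1) ∨ (c = i ∧ d = j-1) ∨ (c = i ∧ d = j) ∨ (c = i ∧ d = j+1) ∨ (c = i+1 ∧ d = j))) := by
  cases s
  · left
    rw [placed_dia_iff] at h
    obtain ⟨k1, k2, k3, k4⟩ := h
    have m1 : (i+j-1 : ℤ) < c + d := by
      have : ((i+j-1 : ℤ):ℝ) < ((c+d : ℤ):ℝ) := by push_cast; linarith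
      exact int_lt_of_cast this
    have m2 : c + d < (i+j+2 : ℤ) := by
      have : ((c+d : ℤ):ℝ) < ((i+j+2 : ℤ):ℝ) := by push_cast; linarith
      exact int_lt_of_cast this
    have m3 : (i-j-2 : ℤ) < c - d := by
      have : ((i-j-2 : ℤ):ℝ) < ((c-d : ℤ):ℝ) := by push_cast; linarith
      exact int_lt_of_cast this
    have m4 : c - d < (i-j+1 : ℤ) := by
      have : ((c-d : ℤ):ℝ) < ((i-j+1 : ℤ):ℝ) := by push_cast; linarith
      exact int_lt_of_cast this
    exact ⟨rfl, by omega⟩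
  · right
    rw [placed_oct_iff] at h
    obtain ⟨k1, k2, k3, k4, k5, k6, k7, k8⟩ := h
    have mx1 : (i-2 : ℤ) < c := by
      have : ((i-2 : ℤ):ℝ) < ((c : ℤ):ℝ) := by push_cast; linarith
      exact int_lt_of_cast this
    have mx2 : c < (i+2 : ℤ) := by
      have : ((c : ℤ):ℝ) < ((i+2 : ℤ):ℝ) := by push_cast; linarith
      exact int_lt_of_cast this
    have my1 : (j-2 : ℤ) < d := by
      have : ((j-2 : ℤ):ℝ) < ((d : ℤ):ℝ) := by push_cast; linarith
      exact int_lt_of_cast this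
    have my2 : d < (j+2 : ℤ) := by
      have : ((d : ℤ):ℝ) < ((j+2 : ℤ):ℝ) := by push_cast; linarith
      exact int_lt_of_cast this
    have ms1 : (i+j-3 : ℤ) < c+d := by
      have : ((i+j-3 : ℤ):ℝ) < ((c+d : ℤ):ℝ) := by push_cast; linarith
      exact int_lt_of_cast this
    have ms2 : c+d < (i+j+2 : ℤ) := by
      have : ((c+d : ℤ):ℝ) < ((i+j+2 : ℤ):ℝ) := by push_cast; linarith
      exact int_lt_of_cast this
    have md1 : (i-j-3 : ℤ) < c-d := by
      have : ((i-j-3 : ℤ):ℝ) < ((c-d : ℤ):ℝ) := by push_cast; linarith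
      exact int_lt_of_cast this
    have md2 : c-d < (i-j+2 : ℤ) := by
      have : ((c-d : ℤ):ℝ) < ((i-j+2 : ℤ):ℝ) := by push_cast; linarith
      exact int_lt_of_cast this
    exact ⟨rfl, by omega⟩

lemma candRp {c d : ℤ} {s : Bool} (i j : ℤ)
    (h : (((i:ℝ)+3/4, (j:ℝ)+1/2) : ℝ×ℝ) ∈ placedTile ((c,d),s)) :
    (s = false ∧ ((c = i+1 ∧ d = j) ∨ (c = i+1 ∧ d = j+1))) ∨ (s = true ∧ ((c = i-1 ∧ d = j) ∨ (c = i ∧ d = j-1) ∨ (c = i ∧ d = j) ∨ (c = i ∧ d = j+1) ∨ (c = i+1 ∧ d = j-1) ∨ (c = i+1 ∧ d = j) ∨ (c = i+1 ∧ d = j+1))) := by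
  cases s
  · left
    rw [placed_dia_iff] at h
    obtain ⟨k1, k2, k3, k4⟩ := h
    have m1 : (i+j : ℤ) < c + d := by
      have : ((i+j : ℤ):ℝ) < ((c+d : ℤ):ℝ) := by push_cast; linarith
      exact int_lt_of_cast this
    have m2 : c + d < (i+j+3 : ℤ) := by
      have : ((c+d : ℤ):ℝ) < ((i+j+3 : ℤ):ℝ) := by push_cast; linarith
      exact int_lt_of_cast this
    have m3 : (i-j-1 : ℤ) < c - d := by
      have : ((i-j-1 : ℤ):ℝ) < ((c-d : ℤ):ℝ) := by push_cast; linarith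
      exact int_lt_of_cast this
    have m4 : c - d < (i-j+2 : ℤ) := by
      have : ((c-d : ℤ):ℝ) < ((i-j+2 : ℤ):ℝ) := by push_cast; linarith
      exact int_lt_of_cast this
    exact ⟨rfl, by omega⟩
  · right
    rw [placed_oct_iff] at h
    obtain ⟨k1, k2, k3, k4, k5, k6, k7, k8⟩ := h
    have mx1 : (i-2 : ℤ) < c := by
      have : ((i-2 : ℤ):ℝ) < ((c : ℤ):ℝ) := by push_cast; linarith
      exact int_lt_of_cast this
    have mx2 : c < (i+2 : ℤ) := by
      have : ((c : ℤ):ℝ) < ((i+2 : ℤ):ℝ) := by push_cast; linarith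
      exact int_lt_of_cast this
    have my1 : (j-2 : ℤ) < d := by
      have : ((j-2 : ℤ):ℝ) < ((d : ℤ):ℝ) := by push_cast; linarith
      exact int_lt_of_cast this
    have my2 : d < (j+2 : ℤ) := by
      have : ((d : ℤ):ℝ) < ((j+2 : ℤ):ℝ) := by push_cast; linarith
      exact int_lt_of_cast this
    have ms1 : (i+j-2 : ℤ) < c+d := by
      have : ((i+j-2 : ℤ):ℝ) < ((c+d : ℤ):ℝ) := by push_cast; linarith
      exact int_lt_of_cast this
    have ms2 : c+d < (i+j+3 : ℤ) := by
      have : ((c+d : ℤ):ℝ) < ((i+j+3 : ℤ):ℝ) := by push_cast; linarith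
      exact int_lt_of_cast this
    have md1 : (i-j-2 : ℤ) < c-d := by
      have : ((i-j-2 : ℤ):ℝ) < ((c-d : ℤ):ℝ) := by push_cast; linarith
      exact int_lt_of_cast this
    have md2 : c-d < (i-j+3 : ℤ) := by
      have : ((c-d : ℤ):ℝ) < ((i-j+3 : ℤ):ℝ) := by push_cast; linarith
      exact int_lt_of_cast this
    exact ⟨rfl, by omega⟩




lemma ne_helper {a1 b1 a2 b2 : ℤ} {s1 s2 : Bool} (h : a1 ≠ a2 ∨ b1 ≠ b2 ∨ s1 ≠ s2) :
    (((a1,b1),s1) : (ℤ×ℤ)×Bool) ≠ ((a2,b2),s2) := by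
  intro he
  injection he with h1 h2
  injection h1 with h3 h4
  rcases h with h|h|h <;> exact h (by simp_all)

lemma force_right {X : Set ((ℤ×ℤ)×Bool)}
    (hadm : X.Pairwise fun p q => Disjoint (interior (placedTile p)) (interior (placedTile q)))
    (hcov : ⋃ p ∈ X, placedTile p = Set.univ) {a b : ℤ}
    (h : ((a,b),true) ∈ X) : (((a+3,b),true)) ∈ X := by
  obtain ⟨⟨⟨c,d⟩,s⟩, hq, hmem⟩ := cover_point hcov (((a+2 : ℤ):ℝ)+1/4, ((b : ℤ):ℝ)+1/2)
  rcases candR (a+2) (b) hmem with ⟨rfl, (⟨hc,hd⟩|⟨hc,hd⟩)⟩ | ⟨rfl, (⟨hc,hd⟩|⟨hc,hd⟩|⟨hc,hd⟩|⟨hc,hd⟩|⟨hc,hd⟩|⟨hc,hd⟩|⟨hc,hd⟩)⟩ <;> rw [hc, hd] at hq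
  · exact (no_overlap hadm h hq (ne_helper (Or.inr (Or.inr (by simp)))) (interior_oct a b ((a:ℝ) + ((21)/20 : ℝ)) ((b:ℝ) + (0 : ℝ)) (by push_cast; and_intros <;> linarith)) (interior_dia (a+2) (b) ((a:ℝ) + ((21)/20 : ℝ)) ((b:ℝ) + (0 : ℝ)) (by push_cast; and_intros <;> linarith))).elim
  · exact (no_overlap hadm h hq (ne_helper (Or.inr (Or.inr (by simp)))) (interior_oct a b ((a:ℝ) + ((21)/20 : ℝ)) ((b:ℝ) + ((1)/1 : ℝ)) (by push_cast; and_intros <;> linarith)) (interior_dia (a+2) (b+1) ((a:ℝ) + ((21)/20 : ℝ)) ((b:ℝ) + ((1)/1 : ℝ)) (by push_cast; and_intros <;> linarith))).elim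
  · exact (no_overlap hadm h hq (ne_helper (Or.inl (by omega))) (interior_oct a b ((a:ℝ) + ((1)/20 : ℝ)) ((b:ℝ) + ((-19)/20 : ℝ)) (by push_cast; and_intros <;> linarith)) (interior_oct (a+2-1) (b-1) ((a:ℝ) + ((1)/20 : ℝ)) ((b:ℝ) + ((-19)/20 : ℝ)) (by push_cast; and_intros <;> linarith))).elim
  · exact (no_overlap hadm h hq (ne_helper (Or.inl (by omega))) (interior_oct a b ((a:ℝ) + ((1)/20 : ℝ)) ((b:ℝ) + (0 : ℝ)) (by push_cast; and_intros <;> linarith)) (interior_oct (a+2-1) (b) ((a:ℝ) + ((1)/20 : ℝ)) ((b:ℝ) + (0 : ℝ)) (by push_cast; and_intros <;> linarith))).elim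
  · exact (no_overlap hadm h hq (ne_helper (Or.inl (by omega))) (interior_oct a b ((a:ℝ) + ((1)/20 : ℝ)) ((b:ℝ) + ((1)/1 : ℝ)) (by push_cast; and_intros <;> linarith)) (interior_oct (a+2-1) (b+1) ((a:ℝ) + ((1)/20 : ℝ)) ((b:ℝ) + ((1)/1 : ℝ)) (by push_cast; and_intros <;> linarith))).elim
  · exact (no_overlap hadm h hq (ne_helper (Or.inl (by omega))) (interior_oct a b ((a:ℝ) + ((21)/20 : ℝ)) ((b:ℝ) + ((-9)/10 : ℝ)) (by push_cast; and_intros <;> linarith)) (interior_oct (a+2) (b-1) ((a:ℝ) + ((21)/20 : ℝ)) ((b:ℝ) + ((-9)/10 : ℝ)) (by push_cast; and_intros <;> linarith))).elim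
  · exact (no_overlap hadm h hq (ne_helper (Or.inl (by omega))) (interior_oct a b ((a:ℝ) + ((21)/20 : ℝ)) ((b:ℝ) + (0 : ℝ)) (by push_cast; and_intros <;> linarith)) (interior_oct (a+2) (b) ((a:ℝ) + ((21)/20 : ℝ)) ((b:ℝ) + (0 : ℝ)) (by push_cast; and_intros <;> linarith))).elim
  · exact (no_overlap hadm h hq (ne_helper (Or.inl (by omega))) (interior_oct a b ((a:ℝ) + ((21)/20 : ℝ)) ((b:ℝ) + ((1)/1 : ℝ)) (by push_cast; and_intros <;> linarith)) (interior_oct (a+2) (b+1) ((a:ℝ) + ((21)/20 : ℝ)) ((b:ℝ) + ((1)/1 : ℝ)) (by push_cast; and_intros <;> linarith))).elim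
  · have e1 : (a+2+1 : ℤ) = a+3 := by ring
    rw [e1] at hq
    exact hq

lemma force_left {X : Set ((ℤ×ℤ)×Bool)}
    (hadm : X.Pairwise fun p q => Disjoint (interior (placedTile p)) (interior (placedTile q)))
    (hcov : ⋃ p ∈ X, placedTile p = Set.univ) {a b : ℤ}
    (h : ((a,b),true) ∈ X) : (((a-3,b),true)) ∈ X := by
  obtain ⟨⟨⟨c,d⟩,s⟩, hq, hmem⟩ := cover_point hcov (((a-2 : ℤ):ℝ)+3/4, ((b : ℤ):ℝ)+1/2)
  rcases candRp (a-2) (b) hmem with ⟨rfl, (⟨hc,hd⟩|⟨hc,hd⟩)⟩ | ⟨rfl, (⟨hc,hd⟩|⟨hc,hd⟩|⟨hc,hd⟩|⟨hc,hd⟩|⟨hc,hd⟩|⟨hc,hd⟩|⟨hc,hd⟩)⟩ <;> rw [hc, hd] at hq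
  · exact (no_overlap hadm h hq (ne_helper (Or.inr (Or.inr (by simp)))) (interior_oct a b ((a:ℝ) + ((-19)/20 : ℝ)) ((b:ℝ) + (0 : ℝ)) (by push_cast; and_intros <;> linarith)) (interior_dia (a-2+1) (b) ((a:ℝ) + ((-19)/20 : ℝ)) ((b:ℝ) + (0 : ℝ)) (by push_cast; and_intros <;> linarith))).elim
  · exact (no_overlap hadm h hq (ne_helper (Or.inr (Or.inr (by simp)))) (interior_oct a b ((a:ℝ) + ((-19)/20 : ℝ)) ((b:ℝ) + ((1)/10 : ℝ)) (by push_cast; and_intros <;> linarith)) (interior_dia (a-2+1) (b+1) ((a:ℝ) + ((-19)/20 : ℝ)) ((b:ℝ) + ((1)/10 : ℝ)) (by push_cast; and_intros <;> linarith))).elim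
  · have e1 : (a-2-1 : ℤ) = a-3 := by ring
    rw [e1] at hq
    exact hq
  · exact (no_overlap hadm h hq (ne_helper (Or.inl (by omega))) (interior_oct a b ((a:ℝ) + ((-19)/20 : ℝ)) ((b:ℝ) + (0 : ℝ)) (by push_cast; and_intros <;> linarith)) (interior_oct (a-2) (b-1) ((a:ℝ) + ((-19)/20 : ℝ)) ((b:ℝ) + (0 : ℝ)) (by push_cast; and_intros <;> linarith))).elim
  · exact (no_overlap hadm h hq (ne_helper (Or.inl (by omega))) (interior_oct a b ((a:ℝ) + ((-19)/20 : ℝ)) ((b:ℝ) + (0 : ℝ)) (by push_cast; and_intros <;> linarith)) (interior_oct (a-2) (b) ((a:ℝ) + ((-19)/20 : ℝ)) ((b:ℝ) + (0 : ℝ)) (by push_cast; and_intros <;> linarith))).elim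
  · exact (no_overlap hadm h hq (ne_helper (Or.inl (by omega))) (interior_oct a b ((a:ℝ) + ((-19)/20 : ℝ)) ((b:ℝ) + ((1)/10 : ℝ)) (by push_cast; and_intros <;> linarith)) (interior_oct (a-2) (b+1) ((a:ℝ) + ((-19)/20 : ℝ)) ((b:ℝ) + ((1)/10 : ℝ)) (by push_cast; and_intros <;> linarith))).elim
  · exact (no_overlap hadm h hq (ne_helper (Or.inl (by omega))) (interior_oct a b ((a:ℝ) + ((-19)/20 : ℝ)) ((b:ℝ) + (0 : ℝ)) (by push_cast; and_intros <;> linarith)) (interior_oct (a-2+1) (b-1) ((a:ℝ) + ((-19)/20 : ℝ)) ((b:ℝ) + (0 : ℝ)) (by push_cast; and_intros <;> linarith))).elim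
  · exact (no_overlap hadm h hq (ne_helper (Or.inl (by omega))) (interior_oct a b ((a:ℝ) + ((-19)/20 : ℝ)) ((b:ℝ) + (0 : ℝ)) (by push_cast; and_intros <;> linarith)) (interior_oct (a-2+1) (b) ((a:ℝ) + ((-19)/20 : ℝ)) ((b:ℝ) + (0 : ℝ)) (by push_cast; and_intros <;> linarith))).elim
  · exact (no_overlap hadm h hq (ne_helper (Or.inl (by omega))) (interior_oct a b ((a:ℝ) + ((-19)/20 : ℝ)) ((b:ℝ) + ((1)/20 : ℝ)) (by push_cast; and_intros <;> linarith)) (interior_oct (a-2+1) (b+1) ((a:ℝ) + ((-19)/20 : ℝ)) ((b:ℝ) + ((1)/20 : ℝ)) (by push_cast; and_intros <;> linarith))).elim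

lemma force_top {X : Set ((ℤ×ℤ)×Bool)}
    (hadm : X.Pairwise fun p q => Disjoint (interior (placedTile p)) (interior (placedTile q)))
    (hcov : ⋃ p ∈ X, placedTile p = Set.univ) {a b : ℤ}
    (h : ((a,b),true) ∈ X) : (((a,b+3),true)) ∈ X := by
  obtain ⟨⟨⟨c,d⟩,s⟩, hq, hmem⟩ := cover_point hcov (((a : ℤ):ℝ)+1/2, ((b+2 : ℤ):ℝ)+1/4)
  rcases candU (a) (b+2) hmem with ⟨rfl, (⟨hc,hd⟩|⟨hc,hd⟩)⟩ | ⟨rfl, (⟨hc,hd⟩|⟨hc,hd⟩|⟨hc,hd⟩|⟨hc,hd⟩|⟨hc,hd⟩|⟨hc,hd⟩|⟨hc,hd⟩)⟩ <;> rw [hc, hd] at hq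
  · exact (no_overlap hadm h hq (ne_helper (Or.inr (Or.inr (by simp)))) (interior_oct a b ((a:ℝ) + ((-9)/20 : ℝ)) ((b:ℝ) + ((3)/2 : ℝ)) (by push_cast; and_intros <;> linarith)) (interior_dia (a) (b+2) ((a:ℝ) + ((-9)/20 : ℝ)) ((b:ℝ) + ((3)/2 : ℝ)) (by push_cast; and_intros <;> linarith))).elim
  · exact (no_overlap hadm h hq (ne_helper (Or.inr (Or.inr (by simp)))) (interior_oct a b ((a:ℝ) + ((1)/10 : ℝ)) ((b:ℝ) + ((39)/20 : ℝ)) (by push_cast; and_intros <;> linarith)) (interior_dia (a+1) (b+2) ((a:ℝ) + ((1)/10 : ℝ)) ((b:ℝ) + ((39)/20 : ℝ)) (by push_cast; and_intros <;> linarith))).elim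
  · exact (no_overlap hadm h hq (ne_helper (Or.inl (by omega))) (interior_oct a b ((a:ℝ) + ((-19)/20 : ℝ)) ((b:ℝ) + ((1)/20 : ℝ)) (by push_cast; and_intros <;> linarith)) (interior_oct (a-1) (b+2-1) ((a:ℝ) + ((-19)/20 : ℝ)) ((b:ℝ) + ((1)/20 : ℝ)) (by push_cast; and_intros <;> linarith))).elim
  · exact (no_overlap hadm h hq (ne_helper (Or.inl (by omega))) (interior_oct a b ((a:ℝ) + ((-9)/10 : ℝ)) ((b:ℝ) + ((21)/20 : ℝ)) (by push_cast; and_intros <;> linarith)) (interior_oct (a-1) (b+2) ((a:ℝ) + ((-9)/10 : ℝ)) ((b:ℝ) + ((21)/20 : ℝ)) (by push_cast; and_intros <;> linarith))).elim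
  · exact (no_overlap hadm h hq (ne_helper (Or.inr (Or.inl (by omega)))) (interior_oct a b ((a:ℝ) + ((-19)/20 : ℝ)) ((b:ℝ) + ((1)/1 : ℝ)) (by push_cast; and_intros <;> linarith)) (interior_oct (a) (b+2-1) ((a:ℝ) + ((-19)/20 : ℝ)) ((b:ℝ) + ((1)/1 : ℝ)) (by push_cast; and_intros <;> linarith))).elim
  · exact (no_overlap hadm h hq (ne_helper (Or.inr (Or.inl (by omega)))) (interior_oct a b ((a:ℝ) + ((-9)/20 : ℝ)) ((b:ℝ) + ((3)/2 : ℝ)) (by push_cast; and_intros <;> linarith)) (interior_oct (a) (b+2) ((a:ℝ) + ((-9)/20 : ℝ)) ((b:ℝ) + ((3)/2 : ℝ)) (by push_cast; and_intros <;> linarith))).elim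
  · have e2 : (b+2+1 : ℤ) = b+3 := by ring
    rw [e2] at hq
    exact hq
  · exact (no_overlap hadm h hq (ne_helper (Or.inl (by omega))) (interior_oct a b ((a:ℝ) + ((1)/20 : ℝ)) ((b:ℝ) + ((1)/1 : ℝ)) (by push_cast; and_intros <;> linarith)) (interior_oct (a+1) (b+2-1) ((a:ℝ) + ((1)/20 : ℝ)) ((b:ℝ) + ((1)/1 : ℝ)) (by push_cast; and_intros <;> linarith))).elim
  · exact (no_overlap hadm h hq (ne_helper (Or.inl (by omega))) (interior_oct a b ((a:ℝ) + ((1)/10 : ℝ)) ((b:ℝ) + ((39)/20 : ℝ)) (by push_cast; and_intros <;> linarith)) (interior_oct (a+1) (b+2) ((a:ℝ) + ((1)/10 : ℝ)) ((b:ℝ) + ((39)/20 : ℝ)) (by push_cast; and_intros <;> linarith))).elim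

lemma force_bot {X : Set ((ℤ×ℤ)×Bool)}
    (hadm : X.Pairwise fun p q => Disjoint (interior (placedTile p)) (interior (placedTile q)))
    (hcov : ⋃ p ∈ X, placedTile p = Set.univ) {a b : ℤ}
    (h : ((a,b),true) ∈ X) : (((a,b-3),true)) ∈ X := by
  obtain ⟨⟨⟨c,d⟩,s⟩, hq, hmem⟩ := cover_point hcov (((a : ℤ):ℝ)+1/2, ((b-2 : ℤ):ℝ)+3/4)
  rcases candUp (a) (b-2) hmem with ⟨rfl, (⟨hc,hd⟩|⟨hc,hd⟩)⟩ | ⟨rfl, (⟨hc,hd⟩|⟨hc,hd⟩|⟨hc,hd⟩|⟨hc,hd⟩|⟨hc,hd⟩|⟨hc,hd⟩|⟨hc,hd⟩)⟩ <;> rw [hc, hd] at hq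
  · exact (no_overlap hadm h hq (ne_helper (Or.inr (Or.inr (by simp)))) (interior_oct a b ((a:ℝ) + ((-9)/20 : ℝ)) ((b:ℝ) + ((-1)/2 : ℝ)) (by push_cast; and_intros <;> linarith)) (interior_dia (a) (b-2+1) ((a:ℝ) + ((-9)/20 : ℝ)) ((b:ℝ) + ((-1)/2 : ℝ)) (by push_cast; and_intros <;> linarith))).elim
  · exact (no_overlap hadm h hq (ne_helper (Or.inr (Or.inr (by simp)))) (interior_oct a b ((a:ℝ) + ((1)/10 : ℝ)) ((b:ℝ) + ((-19)/20 : ℝ)) (by push_cast; and_intros <;> linarith)) (interior_dia (a+1) (b-2+1) ((a:ℝ) + ((1)/10 : ℝ)) ((b:ℝ) + ((-19)/20 : ℝ)) (by push_cast; and_intros <;> linarith))).elim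
  · exact (no_overlap hadm h hq (ne_helper (Or.inl (by omega))) (interior_oct a b ((a:ℝ) + ((-9)/10 : ℝ)) ((b:ℝ) + ((-1)/20 : ℝ)) (by push_cast; and_intros <;> linarith)) (interior_oct (a-1) (b-2) ((a:ℝ) + ((-9)/10 : ℝ)) ((b:ℝ) + ((-1)/20 : ℝ)) (by push_cast; and_intros <;> linarith))).elim
  · exact (no_overlap hadm h hq (ne_helper (Or.inl (by omega))) (interior_oct a b ((a:ℝ) + ((-19)/20 : ℝ)) ((b:ℝ) + (0 : ℝ)) (by push_cast; and_intros <;> linarith)) (interior_oct (a-1) (b-2+1) ((a:ℝ) + ((-19)/20 : ℝ)) ((b:ℝ) + (0 : ℝ)) (by push_cast; and_intros <;> linarith))).elim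
  · have e2 : (b-2-1 : ℤ) = b-3 := by ring
    rw [e2] at hq
    exact hq
  · exact (no_overlap hadm h hq (ne_helper (Or.inr (Or.inl (by omega)))) (interior_oct a b ((a:ℝ) + ((-9)/20 : ℝ)) ((b:ℝ) + ((-1)/2 : ℝ)) (by push_cast; and_intros <;> linarith)) (interior_oct (a) (b-2) ((a:ℝ) + ((-9)/20 : ℝ)) ((b:ℝ) + ((-1)/2 : ℝ)) (by push_cast; and_intros <;> linarith))).elim
  · exact (no_overlap hadm h hq (ne_helper (Or.inr (Or.inl (by omega)))) (interior_oct a b ((a:ℝ) + ((-19)/20 : ℝ)) ((b:ℝ) + (0 : ℝ)) (by push_cast; and_intros <;> linarith)) (interior_oct (a) (b-2+1) ((a:ℝ) + ((-19)/20 : ℝ)) ((b:ℝ) + (0 : ℝ)) (by push_cast; and_intros <;> linarith))).elim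
  · exact (no_overlap hadm h hq (ne_helper (Or.inl (by omega))) (interior_oct a b ((a:ℝ) + ((1)/10 : ℝ)) ((b:ℝ) + ((-19)/20 : ℝ)) (by push_cast; and_intros <;> linarith)) (interior_oct (a+1) (b-2) ((a:ℝ) + ((1)/10 : ℝ)) ((b:ℝ) + ((-19)/20 : ℝ)) (by push_cast; and_intros <;> linarith))).elim
  · exact (no_overlap hadm h hq (ne_helper (Or.inl (by omega))) (interior_oct a b ((a:ℝ) + ((1)/20 : ℝ)) ((b:ℝ) + ((-19)/20 : ℝ)) (by push_cast; and_intros <;> linarith)) (interior_oct (a+1) (b-2+1) ((a:ℝ) + ((1)/20 : ℝ)) ((b:ℝ) + ((-19)/20 : ℝ)) (by push_cast; and_intros <;> linarith))).elim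

lemma force_corner {X : Set ((ℤ×ℤ)×Bool)}
    (hadm : X.Pairwise fun p q => Disjoint (interior (placedTile p)) (interior (placedTile q)))
    (hcov : ⋃ p ∈ X, placedTile p = Set.univ) {a b : ℤ}
    (h : ((a,b),true) ∈ X) (h2 : ((a+3,b),true) ∈ X) : (((a+2,b+2),false)) ∈ X := by
  obtain ⟨⟨⟨c,d⟩,s⟩, hq, hmem⟩ := cover_point hcov (((a+1 : ℤ):ℝ)+3/4, ((b+1 : ℤ):ℝ)+1/2)
  rcases candRp (a+1) (b+1) hmem with ⟨rfl, (⟨hc,hd⟩|⟨hc,hd⟩)⟩ | ⟨rfl, (⟨hc,hd⟩|⟨hc,hd⟩|⟨hc,hd⟩|⟨hc,hd⟩|⟨hc,hd⟩|⟨hc,hd⟩|⟨hc,hd⟩)⟩ <;> rw [hc, hd] at hq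
  · exact (no_overlap hadm h hq (ne_helper (Or.inr (Or.inr (by simp)))) (interior_oct a b ((a:ℝ) + ((21)/20 : ℝ)) ((b:ℝ) + ((1)/1 : ℝ)) (by push_cast; and_intros <;> linarith)) (interior_dia (a+1+1) (b+1) ((a:ℝ) + ((21)/20 : ℝ)) ((b:ℝ) + ((1)/1 : ℝ)) (by push_cast; and_intros <;> linarith))).elim
  · have e1 : (a+1+1 : ℤ) = a+2 := by ring
    have e2 : (b+1+1 : ℤ) = b+2 := by ring
    rw [e1, e2] at hq
    exact hq
  · exact (no_overlap hadm h hq (ne_helper (Or.inr (Or.inl (by omega)))) (interior_oct a b ((a:ℝ) + ((-19)/20 : ℝ)) ((b:ℝ) + ((1)/1 : ℝ)) (by push_cast; and_intros <;> linarith)) (interior_oct (a+1-1) (b+1) ((a:ℝ) + ((-19)/20 : ℝ)) ((b:ℝ) + ((1)/1 : ℝ)) (by push_cast; and_intros <;> linarith))).elim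
  · exact (no_overlap hadm h hq (ne_helper (Or.inl (by omega))) (interior_oct a b ((a:ℝ) + ((1)/20 : ℝ)) ((b:ℝ) + (0 : ℝ)) (by push_cast; and_intros <;> linarith)) (interior_oct (a+1) (b+1-1) ((a:ℝ) + ((1)/20 : ℝ)) ((b:ℝ) + (0 : ℝ)) (by push_cast; and_intros <;> linarith))).elim
  · exact (no_overlap hadm h hq (ne_helper (Or.inl (by omega))) (interior_oct a b ((a:ℝ) + ((1)/20 : ℝ)) ((b:ℝ) + ((1)/1 : ℝ)) (by push_cast; and_intros <;> linarith)) (interior_oct (a+1) (b+1) ((a:ℝ) + ((1)/20 : ℝ)) ((b:ℝ) + ((1)/1 : ℝ)) (by push_cast; and_intros <;> linarith))).elim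
  · exact (no_overlap hadm h hq (ne_helper (Or.inl (by omega))) (interior_oct a b ((a:ℝ) + ((1)/10 : ℝ)) ((b:ℝ) + ((39)/20 : ℝ)) (by push_cast; and_intros <;> linarith)) (interior_oct (a+1) (b+1+1) ((a:ℝ) + ((1)/10 : ℝ)) ((b:ℝ) + ((39)/20 : ℝ)) (by push_cast; and_intros <;> linarith))).elim
  · exact (no_overlap hadm h hq (ne_helper (Or.inl (by omega))) (interior_oct a b ((a:ℝ) + ((21)/20 : ℝ)) ((b:ℝ) + (0 : ℝ)) (by push_cast; and_intros <;> linarith)) (interior_oct (a+1+1) (b+1-1) ((a:ℝ) + ((21)/20 : ℝ)) ((b:ℝ) + (0 : ℝ)) (by push_cast; and_intros <;> linarith))).elim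
  · exact (no_overlap hadm h hq (ne_helper (Or.inl (by omega))) (interior_oct a b ((a:ℝ) + ((21)/20 : ℝ)) ((b:ℝ) + ((1)/1 : ℝ)) (by push_cast; and_intros <;> linarith)) (interior_oct (a+1+1) (b+1) ((a:ℝ) + ((21)/20 : ℝ)) ((b:ℝ) + ((1)/1 : ℝ)) (by push_cast; and_intros <;> linarith))).elim
  · exact (no_overlap hadm h2 hq (ne_helper (Or.inl (by omega))) (interior_oct (a+3) b ((a:ℝ) + ((21)/10 : ℝ)) ((b:ℝ) + ((21)/20 : ℝ)) (by push_cast; and_intros <;> linarith)) (interior_oct (a+1+1) (b+1+1) ((a:ℝ) + ((21)/10 : ℝ)) ((b:ℝ) + ((21)/20 : ℝ)) (by push_cast; and_intros <;> linarith))).elim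


lemma force_d1 {X : Set ((ℤ×ℤ)×Bool)}
    (hadm : X.Pairwise fun p q => Disjoint (interior (placedTile p)) (interior (placedTile q)))
    (hcov : ⋃ p ∈ X, placedTile p = Set.univ) (hall : ∀ p ∈ X, p.2 = false) {a b : ℤ}
    (h : ((a,b),false) ∈ X) : (((a+1,b+1),false)) ∈ X := by
  obtain ⟨⟨⟨c,d⟩,s⟩, hq, hmem⟩ := cover_point hcov ((((a : ℤ)):ℝ)+1/2, ((b : ℤ):ℝ)+3/4)
  rcases candUp a b hmem with ⟨rfl, (⟨hc,hd⟩|⟨hc,hd⟩)⟩ | ⟨rfl, -⟩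
  · rw [hc, hd] at hq
    exact (no_overlap hadm h hq (ne_helper (Or.inr (Or.inl (by omega)))) (interior_dia a b ((a:ℝ) + (0 : ℝ)) ((b:ℝ) + (1/2 : ℝ)) (by push_cast; and_intros <;> linarith)) (interior_dia a (b+1) ((a:ℝ) + (0 : ℝ)) ((b:ℝ) + (1/2 : ℝ)) (by push_cast; and_intros <;> linarith))).elim
  · rw [hc, hd] at hq
    exact hq
  · have := hall _ hq
    simp at this

lemma force_d2 {X : Set ((ℤ×ℤ)×Bool)}
    (hadm : X.Pairwise fun p q => Disjoint (interior (placedTile p)) (interior (placedTile q)))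
    (hcov : ⋃ p ∈ X, placedTile p = Set.univ) (hall : ∀ p ∈ X, p.2 = false) {a b : ℤ}
    (h : ((a,b),false) ∈ X) : (((a+1,b-1),false)) ∈ X := by
  obtain ⟨⟨⟨c,d⟩,s⟩, hq, hmem⟩ := cover_point hcov ((((a : ℤ)):ℝ)+1/2, ((b-1 : ℤ):ℝ)+1/4)
  rcases candU a (b-1) hmem with ⟨rfl, (⟨hc,hd⟩|⟨hc,hd⟩)⟩ | ⟨rfl, -⟩
  · rw [hc, hd] at hq
    exact (no_overlap hadm h hq (ne_helper (Or.inr (Or.inl (by omega)))) (interior_dia a b ((a:ℝ) + (0 : ℝ)) ((b:ℝ) + (-1/2 : ℝ)) (by push_cast; and_intros <;> linarith)) (interior_dia a (b-1) ((a:ℝ) + (0 : ℝ)) ((b:ℝ) + (-1/2 : ℝ)) (by push_cast; and_intros <;> linarith))).elim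
  · rw [hc, hd] at hq
    exact hq
  · have := hall _ hq
    simp at this

lemma force_d3 {X : Set ((ℤ×ℤ)×Bool)}
    (hadm : X.Pairwise fun p q => Disjoint (interior (placedTile p)) (interior (placedTile q)))
    (hcov : ⋃ p ∈ X, placedTile p = Set.univ) (hall : ∀ p ∈ X, p.2 = false) {a b : ℤ}
    (h : ((a,b),false) ∈ X) : (((a-1,b+1),false)) ∈ X := by
  obtain ⟨⟨⟨c,d⟩,s⟩, hq, hmem⟩ := cover_point hcov ((((a-1 : ℤ)):ℝ)+1/2, ((b : ℤ):ℝ)+3/4)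
  rcases candUp (a-1) b hmem with ⟨rfl, (⟨hc,hd⟩|⟨hc,hd⟩)⟩ | ⟨rfl, -⟩
  · rw [hc, hd] at hq
    exact hq
  · rw [hc, hd] at hq
    exact (no_overlap hadm h hq (ne_helper (Or.inr (Or.inl (by omega)))) (interior_dia a b ((a:ℝ) + (0 : ℝ)) ((b:ℝ) + (1/2 : ℝ)) (by push_cast; and_intros <;> linarith)) (interior_dia (a-1+1) (b+1) ((a:ℝ) + (0 : ℝ)) ((b:ℝ) + (1/2 : ℝ)) (by push_cast; and_intros <;> linarith))).elim
  · have := hall _ hq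
    simp at this

lemma force_d4 {X : Set ((ℤ×ℤ)×Bool)}
    (hadm : X.Pairwise fun p q => Disjoint (interior (placedTile p)) (interior (placedTile q)))
    (hcov : ⋃ p ∈ X, placedTile p = Set.univ) (hall : ∀ p ∈ X, p.2 = false) {a b : ℤ}
    (h : ((a,b),false) ∈ X) : (((a-1,b-1),false)) ∈ X := by
  obtain ⟨⟨⟨c,d⟩,s⟩, hq, hmem⟩ := cover_point hcov ((((a-1 : ℤ)):ℝ)+1/2, ((b-1 : ℤ):ℝ)+1/4)
  rcases candU (a-1) (b-1) hmem with ⟨rfl, (⟨hc,hd⟩|⟨hc,hd⟩)⟩ | ⟨rfl, -⟩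
  · rw [hc, hd] at hq
    exact hq
  · rw [hc, hd] at hq
    exact (no_overlap hadm h hq (ne_helper (Or.inr (Or.inl (by omega)))) (interior_dia a b ((a:ℝ) + (0 : ℝ)) ((b:ℝ) + (-1/2 : ℝ)) (by push_cast; and_intros <;> linarith)) (interior_dia (a-1+1) (b-1) ((a:ℝ) + (0 : ℝ)) ((b:ℝ) + (-1/2 : ℝ)) (by push_cast; and_intros <;> linarith))).elim
  · have := hall _ hq
    simp at this



lemma oct_lattice {X : Set ((ℤ×ℤ)×Bool)}
    (hadm : X.Pairwise fun p q => Disjoint (interior (placedTile p)) (interior (placedTile q)))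
    (hcov : ⋃ p ∈ X, placedTile p = Set.univ) {a b : ℤ}
    (h : ((a,b),true) ∈ X) : ∀ m n : ℤ, ((a+3*m, b+3*n), true) ∈ X := by
  have hrow : ∀ m : ℤ, ((a+3*m, b), true) ∈ X := by
    intro m
    induction m using Int.induction_on with
    | zero => simpa using h
    | succ k ih =>
        have hstep := force_right hadm hcov ih
        have e : a+3*(k:ℤ)+3 = a+3*((k:ℤ)+1) := by ring
        rwa [e] at hstep
    | pred k ih =>
        have hstep := force_left hadm hcov ih
        have e : a+3*(-(k:ℤ))-3 = a+3*(-(k:ℤ)-1) := by ring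
        rwa [e] at hstep
  intro m n
  induction n using Int.induction_on with
  | zero => simpa using hrow m
  | succ k ih =>
      have hstep := force_top hadm hcov ih
      have e : b+3*(k:ℤ)+3 = b+3*((k:ℤ)+1) := by ring
      rwa [e] at hstep
  | pred k ih =>
      have hstep := force_bot hadm hcov ih
      have e : b+3*(-(k:ℤ))-3 = b+3*(-(k:ℤ)-1) := by ring
      rwa [e] at hstep

lemma oct_diamonds {X : Set ((ℤ×ℤ)×Bool)}
    (hadm : X.Pairwise fun p q => Disjoint (interior (placedTile p)) (interior (placedTile q)))
    (hcov : ⋃ p ∈ X, placedTile p = Set.univ) {a b : ℤ}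
    (h : ((a,b),true) ∈ X) : ∀ m n : ℤ, ((a+3*m+2, b+3*n+2), false) ∈ X := by
  intro m n
  have h1 := oct_lattice hadm hcov h m n
  have h2 := oct_lattice hadm hcov h (m+1) n
  have e : a+3*(m+1) = a+3*m+3 := by ring
  rw [e] at h2
  exact force_corner hadm hcov h1 h2

lemma dia_lattice {X : Set ((ℤ×ℤ)×Bool)}
    (hadm : X.Pairwise fun p q => Disjoint (interior (placedTile p)) (interior (placedTile q)))
    (hcov : ⋃ p ∈ X, placedTile p = Set.univ) (hall : ∀ p ∈ X, p.2 = false) {a b : ℤ}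
    (h : ((a,b),false) ∈ X) : ∀ k l : ℤ, ((a+k+l, b+k-l), false) ∈ X := by
  have hdiag : ∀ k : ℤ, ((a+k, b+k), false) ∈ X := by
    intro k
    induction k using Int.induction_on with
    | zero => simpa using h
    | succ k ih =>
        have hstep := force_d1 hadm hcov hall ih
        have e1 : a+(k:ℤ)+1 = a+((k:ℤ)+1) := by ring
        have e2 : b+(k:ℤ)+1 = b+((k:ℤ)+1) := by ring
        rwa [e1, e2] at hstep
    | pred k ih =>
        have hstep := force_d4 hadm hcov hall ih
        have e1 : a+(-(k:ℤ))-1 = a+(-(k:ℤ)-1) := by ring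
        have e2 : b+(-(k:ℤ))-1 = b+(-(k:ℤ)-1) := by ring
        rwa [e1, e2] at hstep
  intro k l
  induction l using Int.induction_on with
  | zero => simpa using hdiag k
  | succ l ih =>
      have hstep := force_d2 hadm hcov hall ih
      have e1 : a+k+(l:ℤ)+1 = a+k+((l:ℤ)+1) := by ring
      have e2 : b+k-(l:ℤ)-1 = b+k-((l:ℤ)+1) := by ring
      rwa [e1, e2] at hstep
  | pred l ih =>
      have hstep := force_d3 hadm hcov hall ih
      have e1 : a+k+(-(l:ℤ))-1 = a+k+(-(l:ℤ)-1) := by ring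
      have e2 : b+k-(-(l:ℤ))+1 = b+k-(-(l:ℤ)-1) := by ring
      rwa [e1, e2] at hstep

lemma oct_residue {X : Set ((ℤ×ℤ)×Bool)}
    (hadm : X.Pairwise fun p q => Disjoint (interior (placedTile p)) (interior (placedTile q)))
    {a b c d : ℤ} (hoct : ∀ m n : ℤ, ((a+3*m, b+3*n), true) ∈ X)
    (hq : ((c,d),true) ∈ X) : 3 ∣ (c-a) ∧ 3 ∣ (d-b) := by
  by_contra hcon
  obtain ⟨m1, hm1a, hm1b⟩ : ∃ m1, c - 1 ≤ a+3*m1 ∧ a+3*m1 ≤ c+1 :=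
    ⟨(c-a+1)/3, by omega, by omega⟩
  obtain ⟨m2, hm2a, hm2b⟩ : ∃ m2, d - 1 ≤ b+3*m2 ∧ b+3*m2 ≤ d+1 :=
    ⟨(d-b+1)/3, by omega, by omega⟩
  have hne : a+3*m1 ≠ c ∨ b+3*m2 ≠ d := by omega
  have rm1a : (c:ℝ) - 1 ≤ (a:ℝ)+3*(m1:ℝ) := by exact_mod_cast hm1a
  have rm1b : (a:ℝ)+3*(m1:ℝ) ≤ (c:ℝ)+1 := by exact_mod_cast hm1b
  have rm2a : (d:ℝ) - 1 ≤ (b:ℝ)+3*(m2:ℝ) := by exact_mod_cast hm2a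
  have rm2b : (b:ℝ)+3*(m2:ℝ) ≤ (d:ℝ)+1 := by exact_mod_cast hm2b
  exact no_overlap hadm (hoct m1 m2) hq
    (ne_helper (by rcases hne with h|h; exacts [Or.inl h, Or.inr (Or.inl h)]))
    (interior_oct (a+3*m1) (b+3*m2)
      (((a:ℝ)+3*(m1:ℝ)+(c:ℝ))/2 + 1/2) (((b:ℝ)+3*(m2:ℝ)+(d:ℝ))/2 + 1/2)
      (by push_cast; and_intros <;> linarith))
    (interior_oct c d
      (((a:ℝ)+3*(m1:ℝ)+(c:ℝ))/2 + 1/2) (((b:ℝ)+3*(m2:ℝ)+(d:ℝ))/2 + 1/2)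
      (by push_cast; and_intros <;> linarith))



lemma dia_residue {X : Set ((ℤ×ℤ)×Bool)}
    (hadm : X.Pairwise fun p q => Disjoint (interior (placedTile p)) (interior (placedTile q)))
    {a b c d : ℤ} (hoct : ∀ m n : ℤ, ((a+3*m, b+3*n), true) ∈ X)
    (hq : ((c,d),false) ∈ X) : (c-a) % 3 = 2 ∧ (d-b) % 3 = 2 := by
  obtain ⟨q1, r1, e1, hr1a, hr1b⟩ : ∃ q r, c = a+3*q+r ∧ 0 ≤ r ∧ r < 3 :=
    ⟨(c-a)/3, (c-a)%3, by omega, by omega, by omega⟩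
  obtain ⟨q2, r2, e2, hr2a, hr2b⟩ : ∃ q r, d = b+3*q+r ∧ 0 ≤ r ∧ r < 3 :=
    ⟨(d-b)/3, (d-b)%3, by omega, by omega, by omega⟩
  have kc : (c:ℝ) = (a:ℝ) + 3*(q1:ℝ) + (r1:ℝ) := by exact_mod_cast e1
  have kd : (d:ℝ) = (b:ℝ) + 3*(q2:ℝ) + (r2:ℝ) := by exact_mod_cast e2
  interval_cases r1 <;> interval_cases r2
  · exact (no_overlap hadm (hoct (q1) (q2)) hq
      (ne_helper (Or.inr (Or.inr (by simp))))
      (interior_oct (a+3*(q1)) (b+3*(q2)) ((c:ℝ) + (0 : ℝ)) ((d:ℝ) + ((1)/2 : ℝ))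
        (by push_cast at kc kd ⊢; and_intros <;> linarith))
      (interior_dia c d ((c:ℝ) + (0 : ℝ)) ((d:ℝ) + ((1)/2 : ℝ))
        (by push_cast at kc kd ⊢; and_intros <;> linarith))).elim
  · exact (no_overlap hadm (hoct (q1) (q2)) hq
      (ne_helper (Or.inr (Or.inr (by simp))))
      (interior_oct (a+3*(q1)) (b+3*(q2)) ((c:ℝ) + (0 : ℝ)) ((d:ℝ) + (0 : ℝ))
        (by push_cast at kc kd ⊢; and_intros <;> linarith))
      (interior_dia c d ((c:ℝ) + (0 : ℝ)) ((d:ℝ) + (0 : ℝ))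
        (by push_cast at kc kd ⊢; and_intros <;> linarith))).elim
  · exact (no_overlap hadm (hoct (q1) (q2+1)) hq
      (ne_helper (Or.inr (Or.inr (by simp))))
      (interior_oct (a+3*(q1)) (b+3*(q2+1)) ((c:ℝ) + (0 : ℝ)) ((d:ℝ) + ((1)/2 : ℝ))
        (by push_cast at kc kd ⊢; and_intros <;> linarith))
      (interior_dia c d ((c:ℝ) + (0 : ℝ)) ((d:ℝ) + ((1)/2 : ℝ))
        (by push_cast at kc kd ⊢; and_intros <;> linarith))).elim
  · exact (no_overlap hadm (hoct (q1) (q2)) hq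
      (ne_helper (Or.inr (Or.inr (by simp))))
      (interior_oct (a+3*(q1)) (b+3*(q2)) ((c:ℝ) + (0 : ℝ)) ((d:ℝ) + (0 : ℝ))
        (by push_cast at kc kd ⊢; and_intros <;> linarith))
      (interior_dia c d ((c:ℝ) + (0 : ℝ)) ((d:ℝ) + (0 : ℝ))
        (by push_cast at kc kd ⊢; and_intros <;> linarith))).elim
  · exact (no_overlap hadm (hoct (q1) (q2)) hq
      (ne_helper (Or.inr (Or.inr (by simp))))
      (interior_oct (a+3*(q1)) (b+3*(q2)) ((c:ℝ) + (0 : ℝ)) ((d:ℝ) + (0 : ℝ))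
        (by push_cast at kc kd ⊢; and_intros <;> linarith))
      (interior_dia c d ((c:ℝ) + (0 : ℝ)) ((d:ℝ) + (0 : ℝ))
        (by push_cast at kc kd ⊢; and_intros <;> linarith))).elim
  · exact (no_overlap hadm (hoct (q1) (q2)) hq
      (ne_helper (Or.inr (Or.inr (by simp))))
      (interior_oct (a+3*(q1)) (b+3*(q2)) ((c:ℝ) + ((-3)/10 : ℝ)) ((d:ℝ) + ((-3)/10 : ℝ))
        (by push_cast at kc kd ⊢; and_intros <;> linarith))
      (interior_dia c d ((c:ℝ) + ((-3)/10 : ℝ)) ((d:ℝ) + ((-3)/10 : ℝ))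
        (by push_cast at kc kd ⊢; and_intros <;> linarith))).elim
  · exact (no_overlap hadm (hoct (q1+1) (q2)) hq
      (ne_helper (Or.inr (Or.inr (by simp))))
      (interior_oct (a+3*(q1+1)) (b+3*(q2)) ((c:ℝ) + ((1)/2 : ℝ)) ((d:ℝ) + (0 : ℝ))
        (by push_cast at kc kd ⊢; and_intros <;> linarith))
      (interior_dia c d ((c:ℝ) + ((1)/2 : ℝ)) ((d:ℝ) + (0 : ℝ))
        (by push_cast at kc kd ⊢; and_intros <;> linarith))).elim
  · exact (no_overlap hadm (hoct (q1) (q2)) hq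
      (ne_helper (Or.inr (Or.inr (by simp))))
      (interior_oct (a+3*(q1)) (b+3*(q2)) ((c:ℝ) + ((-3)/10 : ℝ)) ((d:ℝ) + ((-3)/10 : ℝ))
        (by push_cast at kc kd ⊢; and_intros <;> linarith))
      (interior_dia c d ((c:ℝ) + ((-3)/10 : ℝ)) ((d:ℝ) + ((-3)/10 : ℝ))
        (by push_cast at kc kd ⊢; and_intros <;> linarith))).elim
  · omega


/-- In the diamond–octagon mixture on ℤ², any configuration that
tiles the plane with every diamond's Voronoi cell of area exactly 2 and every
octagon's Voronoi cell of area exactly 7 is a translate of the truncated square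
tiling if it contains an octagon, and is the regular square tiling by diamonds
otherwise. -/
theorem stmt_11
    (X : Set ((ℤ × ℤ) × Bool))
    -- admissibility: pairwise disjoint interiors
    (hadm : X.Pairwise fun p q => Disjoint (interior (placedTile p)) (interior (placedTile q)))
    -- X tiles the plane
    (hcover : ⋃ p ∈ X, placedTile p = Set.univ)
    -- every Voronoi cell has area exactly that of its tile (2 or 7)
    (hvor : ∀ p ∈ X, volume (vorCell X p) = if p.2 then (7 : ℝ≥0∞) else 2) :
    ((∃ p ∈ X, p.2 = true) → ∃ t : ℤ × ℤ, X = translateConfig t truncSquareTiling) ∧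
    ((∀ p ∈ X, p.2 = false) → ∃ t : ℤ × ℤ, X = translateConfig t diamondTiling) := by
  constructor
  · rintro ⟨⟨⟨a,b⟩,s⟩, hp, hs⟩
    have hs' : s = true := hs
    subst hs'
    refine ⟨(a,b), ?_⟩
    have hoct := oct_lattice hadm hcover hp
    have hdia := oct_diamonds hadm hcover hp
    ext ⟨⟨c,d⟩,t⟩
    constructor
    · intro hq
      cases t with
      | false =>
          obtain ⟨hc3, hd3⟩ := dia_residue hadm hoct hq
          refine ⟨((3*((c-a-2)/3)+2, 3*((d-b-2)/3)+2), false),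
            Or.inr ⟨rfl, (c-a-2)/3, (d-b-2)/3, rfl⟩, ?_⟩
          show ((a + (3*((c-a-2)/3)+2), b + (3*((d-b-2)/3)+2)), false) = ((c,d),false)
          simp only [Prod.mk.injEq]
          exact ⟨⟨by omega, by omega⟩, trivial⟩
      | true =>
          obtain ⟨hc3, hd3⟩ := oct_residue hadm hoct hq
          refine ⟨((3*((c-a)/3), 3*((d-b)/3)), true),
            Or.inl ⟨rfl, (c-a)/3, (d-b)/3, rfl⟩, ?_⟩
          show ((a + 3*((c-a)/3), b + 3*((d-b)/3)), true) = ((c,d),true)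
          simp only [Prod.mk.injEq]
          exact ⟨⟨by omega, by omega⟩, trivial⟩
    · intro hq
      obtain ⟨⟨⟨u,v⟩,t0⟩, hp0, heq⟩ := hq
      have heq' : ((a + u, b + v), t0) = ((c,d),t) := heq
      rcases hp0 with ⟨ht0, m, n, huv⟩ | ⟨ht0, m, n, huv⟩
      · have ht0' : t0 = true := ht0
        subst ht0'
        have huv' : ((u,v) : ℤ×ℤ) = (3*m, 3*n) := huv
        injection huv' with hu hv
        subst hu hv
        injection heq' with h1 h2
        injection h1 with hc hd
        subst h2
        rw [← hc, ← hd]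
        exact hoct m n
      · have ht0' : t0 = false := ht0
        subst ht0'
        have huv' : ((u,v) : ℤ×ℤ) = (3*m+2, 3*n+2) := huv
        injection huv' with hu hv
        subst hu hv
        injection heq' with h1 h2
        injection h1 with hc hd
        subst h2
        rw [← hc, ← hd]
        rw [show a+(3*m+2) = a+3*m+2 by ring, show b+(3*n+2) = b+3*n+2 by ring]
        exact hdia m n
  · intro hall
    obtain ⟨⟨⟨a,b⟩,s⟩, hp, -⟩ := cover_point hcover (((0:ℤ):ℝ)+1/2, ((0:ℤ):ℝ)+1/4)
    have hs : s = false := hall _ hp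
    subst hs
    have hlat := dia_lattice hadm hcover hall hp
    refine ⟨(a,b), ?_⟩
    ext ⟨⟨c,d⟩,t⟩
    constructor
    · intro hq
      have ht : t = false := hall _ hq
      subst ht
      by_cases hp2 : (c + d - a - b) % 2 = 0
      · refine ⟨((c-a, d-b), false), ⟨rfl, show ((c-a) + (d-b)) % 2 = 0 by omega⟩, ?_⟩
        show ((a + (c-a), b + (d-b)), false) = ((c,d),false)
        simp only [Prod.mk.injEq]
        exact ⟨⟨by omega, by omega⟩, trivial⟩
      · exfalso
        obtain ⟨k, l, ek, el⟩ : ∃ k l : ℤ, a+k+l = c+1 ∧ b+k-l = d :=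
          ⟨(c+1-a+d-b)/2, (c+1-a-d+b)/2, by omega, by omega⟩
        have hnb := hlat k l
        rw [ek, el] at hnb
        exact no_overlap hadm hq hnb (by apply ne_helper; exact Or.inl (by omega))
          (interior_dia c d ((c:ℝ)+(1/2:ℝ)) ((d:ℝ)+(0:ℝ))
            (by push_cast; and_intros <;> linarith))
          (interior_dia (c+1) d ((c:ℝ)+(1/2:ℝ)) ((d:ℝ)+(0:ℝ))
            (by push_cast; and_intros <;> linarith))
    · intro hq
      obtain ⟨⟨⟨u,v⟩,t0⟩, hp0, heq⟩ := hq
      have heq' : ((a + u, b + v), t0) = ((c,d),t) := heq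
      obtain ⟨ht0, hpar⟩ := hp0
      have ht0' : t0 = false := ht0
      subst ht0'
      have hpar' : (u + v) % 2 = 0 := hpar
      injection heq' with h1 h2
      injection h1 with hc hd
      subst h2
      obtain ⟨k, l, ek, el⟩ : ∃ k l : ℤ, k+l = u ∧ k-l = v :=
        ⟨(u+v)/2, (u-v)/2, by omega, by omega⟩
      have hnb := hlat k l
      rw [← hc, ← hd]
      rw [show a+u = a+k+l by omega, show b+v = b+k-l by omega]
      exact hnb
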